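/- Let G_h be a directed graph on n vertices and let the DET-STRAT instance assign every vertex deadline d(v)=n with all arcs of unit weight. Then any feasible cyclic patrolling sequence of the DET-STRAT instance must visit each vertex exactly once per cycle (i.e., each vertex appears exactly once in σ(1),…,σ(s−1)), and hence corresponds to a directed Hamiltonian circuit of G_h. -/
import Mathlib


def Wsum {V : Type*} (w : V → V → ℕ) (σ : ℕ → V) (k m : ℕ) : ℕ :=
  ∑ j ∈ Finset.Ico k m, w (σ j) (σ (j + 1))

def Feasible {V : Type*} (a : V → V → Prop) (w : V → V → ℕ) (d : V → ℕ)
    (σ : ℕ → V) (p : ℕ) : Prop :=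
  0 < p ∧ (∀ k, σ (k + p) = σ k) ∧ (∀ k, a (σ k) (σ (k + 1))) ∧
    (∀ t : V, ∃ k < p, σ k = t) ∧
    (∀ t : V, ∀ k, ∃ m, k < m ∧ σ m = t ∧ Wsum w σ k m ≤ d t)

/-- In the DET-STRAT instance built from a directed graph on `n` vertices with all
deadlines equal to `n` and unit arc weights, any feasible cyclic patrolling sequence
visits each vertex exactly once per cycle: every vertex occurs exactly once in every
window of `n` consecutive turns, and in particular exactly once in `σ(0),…,σ(n−1)`,
so the sequence corresponds to a directed Hamiltonian circuit of the graph. -/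
theorem detStrat_feasible_is_hamiltonian {V : Type*} [Fintype V]
    (A : V → V → Prop) (σ : ℕ → V) (p : ℕ)
    (h : Feasible A (fun _ _ => 1) (fun _ => Fintype.card V) σ p) :
    (∀ (v : V) (k : ℕ), ∃! m, k ≤ m ∧ m < k + Fintype.card V ∧ σ m = v) ∧
      (∀ v : V, ∃! j, j < Fintype.card V ∧ σ j = v) := by
  obtain ⟨hp, hper, harc, hvisit, hdead⟩ := h
  have hn : Fintype.card V = Fintype.card V := rfl
  have wsum : ∀ k m : ℕ, Wsum (fun _ _ => (1:ℕ)) σ k m = m - k := by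
    intro k m
    simp [Wsum, Nat.card_Ico]
  have atLeast : ∀ (v : V) (k : ℕ), ∃ m, k ≤ m ∧ m < k + Fintype.card V ∧ σ m = v := by
    intro v k
    match k with
    | 0 =>
      obtain ⟨m, hm1, hm2, hm3⟩ := hdead v (p - 1)
      rw [wsum] at hm3
      have hm3' : m - (p - 1) ≤ Fintype.card V := hm3
      have hmp : p ≤ m := by omega
      refine ⟨m - p, by omega, by omega, ?_⟩
      have hpm := hper (m - p)
      rw [show m - p + p = m by omega] at hpm
      rw [← hpm]; exact hm2
    | Nat.succ k' =>
      obtain ⟨m, hm1, hm2, hm3⟩ := hdead v k'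
      rw [wsum] at hm3
      have hm3' : m - k' ≤ Fintype.card V := hm3
      exact ⟨m, by omega, by omega, hm2⟩
  have exact1 : ∀ (v : V) (k : ℕ), ∃! m, k ≤ m ∧ m < k + Fintype.card V ∧ σ m = v := by
    intro v k
    have hsurj : Function.Surjective (fun j : Fin (Fintype.card V) => σ (k + j)) := by
      intro v
      obtain ⟨m, h1, h2, h3⟩ := atLeast v k
      refine ⟨⟨m - k, by omega⟩, ?_⟩
      simp only
      rw [show k + (m - k) = m by omega]
      exact h3
    have hbij : Function.Bijective (fun j : Fin (Fintype.card V) => σ (k + j)) := by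
      rw [Fintype.bijective_iff_surjective_and_card]
      exact ⟨hsurj, by simp⟩
    obtain ⟨m, h1, h2, h3⟩ := atLeast v k
    refine ⟨m, ⟨h1, h2, h3⟩, ?_⟩
    rintro m' ⟨h1', h2', h3'⟩
    have heq : (⟨m' - k, by omega⟩ : Fin (Fintype.card V)) = ⟨m - k, by omega⟩ := by
      apply hbij.1
      simp only
      rw [show k + (m' - k) = m' by omega, show k + (m - k) = m by omega, h3, h3']
    have := Fin.mk.inj_iff.mp heq
    omega
  refine ⟨exact1, fun v => ?_⟩
  obtain ⟨m, ⟨h1, h2, h3⟩, hu⟩ := exact1 v 0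
  exact ⟨m, ⟨by omega, h3⟩, fun j ⟨hj1, hj2⟩ => hu j ⟨Nat.zero_le _, by omega, hj2⟩⟩
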